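/- Let F be a spread of a hyperplane S of PG(4,q), and let r₁,...,r_k (k ≤ q−1) be distinct lines of F. Suppose F_k is obtained from F by successively, for i = 1,...,k, removing r_i and adding q+1 pairwise skew lines not contained in S covering r_i and disjoint from all lines currently in the partial spread other than r_i. Then at each step i ≤ q−1 such a set of q+1 lines exists, provided the number of previously added lines is at most q^2−1 minus q at each point-covering step; in particular since (i−1)(q+1) + q ≤ (q−2)(q+1)+q < q^2 the construction always succeeds for k ≤ q−1. -/

import Mathlib

open Submodule Module



lemma span_pair_finrank {F V : Type*} [Field F] [AddCommGroup V] [Module F V] {a b : V}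
    (h : LinearIndependent F ![a, b]) :
    Module.finrank F (Submodule.span F ({a, b} : Set V)) = 2 := by
  have hs : ({a, b} : Set V) = Set.range ![a, b] := by
    ext x
    simp [Fin.exists_fin_two, eq_comm]
    tauto
  rw [hs, finrank_span_eq_card h, Fintype.card_fin]

lemma avoid_lemma {F : Type} [Field F] [Fintype F] {V : Type} [AddCommGroup V] [Module F V]
    [Fintype V] (q : ℕ) (hF : Fintype.card F = q) (hq : 2 ≤ q)
    (S : Submodule F V) (hS : Module.finrank F S = 4)
    {ι : Type} (T : Finset ι) (hT : T.card ≤ q ^ 2 - 2)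
    (u : ι → V)
    (W : ι → Submodule F V)
    (hW : ∀ t ∈ T, Module.finrank F (W t) ≤ 2) :
    ∃ x ∈ S, ∀ t ∈ T, x - u t ∉ W t := by
  classical
  haveI : Fintype ↥S := Fintype.ofFinite _
  have hcardS : Fintype.card ↥S = q ^ 4 := by
    rw [card_eq_pow_finrank (K := F) (V := ↥S), hS, hF]
  set B : Finset ↥S :=
    T.biUnion (fun t => Finset.univ.filter fun x : ↥S => (x : V) - u t ∈ W t) with hBdef
  have hB : B.card < Fintype.card ↥S := by
    have hb : ∀ t ∈ T,
        (Finset.univ.filter fun x : ↥S => (x : V) - u t ∈ W t).card ≤ q ^ 2 := by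
      intro t ht
      haveI : Fintype ↥(W t) := Fintype.ofFinite _
      have h1 : (Finset.univ.filter fun x : ↥S => (x : V) - u t ∈ W t).card
          ≤ ((W t : Set V).toFinset).card := by
        apply Finset.card_le_card_of_injOn (f := fun x : ↥S => (x : V) - u t)
        · intro x hx
          simp only [Finset.mem_coe, Finset.mem_filter] at hx
          simpa using hx.2
        · intro x _ y _ hxy
          have : (x : V) = y := by
            have := congrArg (· + u t) hxy
            simpa [sub_add_cancel] using this
          exact Subtype.ext this
      have h2 : ((W t : Set V).toFinset).card = Fintype.card ↥(W t) := by
        simp [Set.toFinset_card]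
      have h3 : Fintype.card ↥(W t) ≤ q ^ 2 := by
        rw [card_eq_pow_finrank (K := F) (V := ↥(W t)), hF]
        exact Nat.pow_le_pow_right (by omega) (hW t ht)
      omega
    have hsum : B.card ≤ T.card * q ^ 2 := by
      calc B.card ≤ ∑ t ∈ T, (Finset.univ.filter fun x : ↥S => (x : V) - u t ∈ W t).card :=
            Finset.card_biUnion_le
        _ ≤ ∑ _t ∈ T, q ^ 2 := Finset.sum_le_sum hb
        _ = T.card * q ^ 2 := by simp [Finset.sum_const, mul_comm]
    have hlt : T.card * q ^ 2 < q ^ 4 := by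
      have h1 : T.card * q ^ 2 ≤ (q ^ 2 - 2) * q ^ 2 := Nat.mul_le_mul_right _ hT
      have h2 : (q ^ 2 - 2) * q ^ 2 < q ^ 2 * q ^ 2 := by
        have hq2 : 0 < q ^ 2 := by positivity
        exact (Nat.mul_lt_mul_right hq2).mpr (by omega)
      have h3 : q ^ 2 * q ^ 2 = q ^ 4 := by ring
      omega
    omega
  have hx : ∃ x : ↥S, x ∉ B := by
    by_contra h
    push_neg at h
    have : (Finset.univ : Finset ↥S) ⊆ B := fun x _ => h x
    have := Finset.card_le_card this
    simp [Finset.card_univ] at this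
    omega
  obtain ⟨x, hx⟩ := hx
  refine ⟨(x : V), x.2, fun t ht hmem => hx ?_⟩
  rw [hBdef, Finset.mem_biUnion]
  exact ⟨t, ht, by simp [hmem]⟩

lemma choose_u {F : Type} [Field F] [Fintype F] {V : Type} [AddCommGroup V] [Module F V]
    [Fintype V] (q : ℕ) (hF : Fintype.card F = q) (hq : 2 ≤ q)
    (S : Submodule F V) (hS : Module.finrank F S = 4)
    {ι : Type} [Fintype ι] (hι : Fintype.card ι ≤ q ^ 2 - 1)
    (p : ι → V)
    (hp : ∀ t t', t ≠ t' → LinearIndependent F ![p t, p t']) :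
    ∃ u : ι → V, (∀ t, u t ∈ S) ∧
      ∀ t t', t ≠ t' → u t' - u t ∉ Submodule.span F ({p t, p t'} : Set V) := by
  classical
  suffices h : ∀ s : Finset ι, ∃ u : ι → V, (∀ t, u t ∈ S) ∧
      ∀ t ∈ s, ∀ t' ∈ s, t ≠ t' →
        u t' - u t ∉ Submodule.span F ({p t, p t'} : Set V) by
    obtain ⟨u, h1, h2⟩ := h Finset.univ
    exact ⟨u, h1, fun t t' hne => h2 t (Finset.mem_univ _) t' (Finset.mem_univ _) hne⟩
  intro s
  induction s using Finset.induction_on with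
  | empty => exact ⟨0, fun _ => S.zero_mem, by simp⟩
  | @insert a s ha ih =>
    obtain ⟨u, hu1, hu2⟩ := ih
    have hscard : s.card ≤ q ^ 2 - 2 := by
      have h1 : (insert a s).card ≤ Fintype.card ι := Finset.card_le_univ _
      rw [Finset.card_insert_of_notMem ha] at h1
      omega
    obtain ⟨x, hxS, hx⟩ := avoid_lemma q hF hq S hS s hscard u
      (fun t' => Submodule.span F ({p a, p t'} : Set V))
      (fun t' ht' => le_of_eq (span_pair_finrank (hp a t' (fun h => ha (by rw [h]; exact ht')))))
    refine ⟨Function.update u a x, ?_, ?_⟩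
    · intro t
      rcases eq_or_ne t a with rfl | hta
      · rwa [Function.update_self]
      · rw [Function.update_of_ne hta]; exact hu1 t
    · intro t ht t' ht' hne
      rcases Finset.mem_insert.mp ht with rfl | hts
      · -- t = a, t' ∈ s
        have ht's : t' ∈ s := by
          rcases Finset.mem_insert.mp ht' with rfl | h
          · exact absurd rfl hne
          · exact h
        have ht'a : t' ≠ t := fun h => ha (by rw [← h]; exact ht's)
        rw [Function.update_self, Function.update_of_ne ht'a]
        intro hmem
        exact hx t' ht's (by
          have : -(u t' - x) ∈ Submodule.span F ({p t, p t'} : Set V) := neg_mem hmem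
          simpa [neg_sub] using this)
      · rcases Finset.mem_insert.mp ht' with rfl | ht's
        · -- t' = a, t ∈ s
          have hta : t ≠ t' := hne
          rw [Function.update_self, Function.update_of_ne (fun h => ha (by rw [← h]; exact hts))]
          intro hmem
          apply hx t hts
          have : ({p t, p t'} : Set V) = {p t', p t} := Set.pair_comm _ _
          rw [this] at hmem
          exact hmem
        · rw [Function.update_of_ne (fun h => ha (by rw [← h]; exact ht's)),
            Function.update_of_ne (fun h => ha (by rw [← h]; exact hts))]
          exact hu2 t hts t' ht's hne

/-- A partial spread of PG(4,q): a set of pairwise disjoint (skew) lines. -/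
def IsPartialSpread (F : Type) [Field F] (L : Set (Submodule F (Fin 5 → F))) : Prop :=
  (∀ ℓ ∈ L, Module.finrank F ℓ = 2) ∧
  ∀ ℓ₁ ∈ L, ∀ ℓ₂ ∈ L, ℓ₁ ≠ ℓ₂ → ℓ₁ ⊓ ℓ₂ = ⊥

/-- Let F be a spread of a hyperplane S of PG(4,q) and r₁,…,r_k (k ≤ q−1)
distinct lines of F. Then the iterative construction succeeds: there exist, for each i, a set
M i of q+1 pairwise skew lines not contained in S covering r i, such that replacing the lines
r₁,…,r_k of F by all the added lines yields a partial spread. -/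
theorem stmt15 (q : ℕ) (F : Type) [Field F] [Fintype F] (hF : Fintype.card F = q)
    (S : Submodule F (Fin 5 → F)) (hS : finrank F S = 4)
    (Fs : Set (Submodule F (Fin 5 → F)))
    (hFsline : ∀ ℓ ∈ Fs, finrank F ℓ = 2) (hFsS : ∀ ℓ ∈ Fs, ℓ ≤ S)
    (hFsskew : ∀ ℓ₁ ∈ Fs, ∀ ℓ₂ ∈ Fs, ℓ₁ ≠ ℓ₂ → ℓ₁ ⊓ ℓ₂ = ⊥)
    (hFscover : ∀ v ∈ S, v ≠ 0 → ∃ ℓ ∈ Fs, v ∈ ℓ)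
    (hFscard : Fs.ncard = q ^ 2 + 1)
    (k : ℕ) (hk : k ≤ q - 1)
    (r : Fin k → Submodule F (Fin 5 → F))
    (hr : ∀ i, r i ∈ Fs) (hrinj : Function.Injective r) :
    ∃ M : Fin k → Set (Submodule F (Fin 5 → F)),
      (∀ i, (M i).ncard = q + 1) ∧
      (∀ i, ∀ ℓ ∈ M i, finrank F ℓ = 2 ∧ ¬ ℓ ≤ S) ∧
      (∀ i, ∀ v ∈ r i, v ≠ 0 → ∃ ℓ ∈ M i, v ∈ ℓ) ∧
      IsPartialSpread F ((Fs \ Set.range r) ∪ ⋃ i, M i) := by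
  classical
  have hq : 2 ≤ q := by
    rw [← hF]; exact Fintype.one_lt_card
  -- a vector outside S
  obtain ⟨w, hw⟩ : ∃ w, w ∉ S := by
    by_contra h
    push_neg at h
    have hT : S = ⊤ := Submodule.eq_top_iff'.mpr h
    rw [hT, finrank_top, Module.finrank_fin_fun] at hS
    omega
  -- skewness of the r i
  have hrskew : ∀ i j : Fin k, i ≠ j → r i ⊓ r j = ⊥ := fun i j hij =>
    hFsskew _ (hr i) _ (hr j) (fun h => hij (hrinj h))
  -- bases of the r i
  have hfr : ∀ i, finrank F (r i) = 2 := fun i => hFsline _ (hr i)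
  let b : ∀ i, Basis (Fin 2) F (r i) := fun i =>
    Module.finBasisOfFinrankEq F (r i) (hfr i)
  set e0 : Fin k → (Fin 5 → F) := fun i => ((b i 0 : r i) : Fin 5 → F) with he0def
  set e1 : Fin k → (Fin 5 → F) := fun i => ((b i 1 : r i) : Fin 5 → F) with he1def
  have he0 : ∀ i, e0 i ∈ r i := fun i => Submodule.coe_mem ((b i) 0)
  have he1 : ∀ i, e1 i ∈ r i := fun i => Submodule.coe_mem ((b i) 1)
  have li01 : ∀ i, ∀ s t : F, s • e0 i + t • e1 i = 0 → s = 0 ∧ t = 0 := by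
    intro i s t hst
    have hli : LinearIndependent F (fun j : Fin 2 => (r i).subtype ((b i) j)) :=
      (b i).linearIndependent.map' (r i).subtype (Submodule.ker_subtype _)
    have h2 := Fintype.linearIndependent_iff.mp hli ![s, t]
      (by
        rw [Fin.sum_univ_two]
        show s • (r i).subtype ((b i) 0) + t • (r i).subtype ((b i) 1) = 0
        exact hst)
    exact ⟨h2 0, h2 1⟩
  -- the points on the lines r i
  set P : Fin k × Option F → (Fin 5 → F) := fun t =>
    Option.elim t.2 (e1 t.1) (fun c => e0 t.1 + c • e1 t.1) with hPdef
  have hPmem : ∀ t, P t ∈ r t.1 := by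
    rintro ⟨i, _ | c⟩
    · exact he1 i
    · exact add_mem (he0 i) (Submodule.smul_mem _ _ (he1 i))
  have hPS : ∀ t, P t ∈ S := fun t => hFsS _ (hr t.1) (hPmem t)
  have hPne : ∀ t, P t ≠ 0 := by
    rintro ⟨i, _ | c⟩ h
    · have h2 := (li01 i 0 1 (by simpa [hPdef] using h)).2
      simp at h2
    · have h2 := (li01 i 1 c (by simpa [hPdef] using h)).1
      simp at h2
  have hPli : ∀ t t', t ≠ t' → LinearIndependent F ![P t, P t'] := by
    rintro ⟨i, o⟩ ⟨i', o'⟩ hne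
    by_cases hii : i = i'
    · subst hii
      have ho : o ≠ o' := fun h => hne (by rw [h])
      rw [LinearIndependent.pair_iff]
      intro s t hst
      cases o with
      | none => cases o' with
        | none => exact absurd rfl ho
        | some c =>
        have h2 : t • e0 i + (s + t * c) • e1 i = 0 := by
          rw [← hst]; show _ = s • e1 i + t • (e0 i + c • e1 i); module
        obtain ⟨h3, h4⟩ := li01 i _ _ h2
        refine ⟨?_, h3⟩
        rw [h3] at h4; simpa using h4
      | some c => cases o' with
        | none =>
        have h2 : s • e0 i + (s * c + t) • e1 i = 0 := by
          rw [← hst]; show _ = s • (e0 i + c • e1 i) + t • e1 i; module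
        obtain ⟨h3, h4⟩ := li01 i _ _ h2
        refine ⟨h3, ?_⟩
        rw [h3] at h4; simpa using h4
        | some c' =>
        have hcc : c ≠ c' := fun h => ho (by rw [h])
        have h2 : (s + t) • e0 i + (s * c + t * c') • e1 i = 0 := by
          rw [← hst]; show _ = s • (e0 i + c • e1 i) + t • (e0 i + c' • e1 i); module
        obtain ⟨h3, h4⟩ := li01 i _ _ h2
        have ht : t = -s := eq_neg_of_add_eq_zero_right h3
        have h5 : s * (c - c') = 0 := by
          rw [ht] at h4; linear_combination h4
        have hs : s = 0 := (mul_eq_zero.mp h5).resolve_right (sub_ne_zero.mpr hcc)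
        exact ⟨hs, by rw [ht, hs, neg_zero]⟩
    · rw [LinearIndependent.pair_iff]
      intro s t hst
      have h1 : s • P (i, o) = -(t • P (i', o')) := eq_neg_of_add_eq_zero_left hst
      have hmem : s • P (i, o) ∈ r i ⊓ r i' :=
        ⟨Submodule.smul_mem _ _ (hPmem (i, o)),
         h1 ▸ neg_mem (Submodule.smul_mem _ _ (hPmem (i', o')))⟩
      rw [hrskew i i' hii] at hmem
      have hs : s = 0 := by
        rcases smul_eq_zero.mp (Submodule.mem_bot _ |>.mp hmem) with h | h
        · exact h
        · exact absurd h (hPne _)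
      refine ⟨hs, ?_⟩
      rw [hs, zero_smul, zero_add] at hst
      rcases smul_eq_zero.mp hst with h | h
      · exact h
      · exact absurd h (hPne _)
  have hcard : Fintype.card (Fin k × Option F) ≤ q ^ 2 - 1 := by
    rw [Fintype.card_prod, Fintype.card_fin, Fintype.card_option, hF]
    obtain ⟨m, rfl⟩ : ∃ m, q = m + 2 := ⟨q - 2, by omega⟩
    have h2 : (m + 2) ^ 2 - 1 = (m + 1) * (m + 3) := by
      have h6 : (m + 2) ^ 2 = (m + 1) * (m + 3) + 1 := by ring
      rw [h6, Nat.add_sub_cancel]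
    rw [h2]
    exact Nat.mul_le_mul (by omega) (by omega)
  obtain ⟨u, huS, hu⟩ := choose_u q hF hq S hS hcard P hPli
  -- the new lines
  set L : Fin k × Option F → Submodule F (Fin 5 → F) :=
    (fun t => Submodule.span F ({P t, w + u t} : Set (Fin 5 → F))) with hLdef
  have hwu : ∀ t, w + u t ∉ S := by
    intro t h
    exact hw (by simpa using sub_mem h (huS t))
  have hLli : ∀ t, LinearIndependent F ![P t, w + u t] := by
    intro t
    rw [LinearIndependent.pair_iff]
    intro s c hsc
    have hc : c = 0 := by
      by_contra hc
      apply hwu t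
      have h1 : c • (w + u t) = -(s • P t) := eq_neg_of_add_eq_zero_right hsc
      have h2 : w + u t = c⁻¹ • -(s • P t) := by
        rw [← h1, smul_smul, inv_mul_cancel₀ hc, one_smul]
      rw [h2]
      exact Submodule.smul_mem _ _ (neg_mem (Submodule.smul_mem _ _ (hPS t)))
    refine ⟨?_, hc⟩
    rw [hc, zero_smul, add_zero] at hsc
    rcases smul_eq_zero.mp hsc with h | h
    · exact h
    · exact absurd h (hPne t)
  have hLrank : ∀ t, finrank F (L t) = 2 := fun t => span_pair_finrank (hLli t)
  have hLnotS : ∀ t, ¬ L t ≤ S := fun t h =>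
    hwu t (h (Submodule.subset_span (by simp)))
  have hLS : ∀ t, ∀ x ∈ L t, x ∈ S → ∃ a : F, x = a • P t := by
    intro t x hx hxS
    rw [hLdef] at hx
    rw [Submodule.mem_span_pair] at hx
    obtain ⟨a, c, h⟩ := hx
    have hc : c = 0 := by
      by_contra hc
      apply hwu t
      have h1 : c • (w + u t) = x - a • P t := by rw [← h]; module
      have h2 : w + u t = c⁻¹ • (x - a • P t) := by
        rw [← h1, smul_smul, inv_mul_cancel₀ hc, one_smul]
      rw [h2]
      exact Submodule.smul_mem _ _ (sub_mem hxS (Submodule.smul_mem _ _ (hPS t)))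
    exact ⟨a, by rw [← h, hc, zero_smul, add_zero]⟩
  have hLdisj : ∀ t t', t ≠ t' → L t ⊓ L t' = ⊥ := by
    intro t t' hne
    rw [eq_bot_iff]
    intro x hx
    obtain ⟨hx1, hx2⟩ := Submodule.mem_inf.mp hx
    rw [hLdef, Submodule.mem_span_pair] at hx1 hx2
    obtain ⟨a, c, h1⟩ := hx1
    obtain ⟨a', c', h2⟩ := hx2
    have heq : a • P t + c • (w + u t) = a' • P t' + c' • (w + u t') := h1.trans h2.symm
    have hcc : c = c' := by
      by_contra hcc
      apply hw
      have h3 : (c - c') • w = (a' • P t' + c' • u t') - (a • P t + c • u t) := by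
        have h4 : (c - c') • w - ((a' • P t' + c' • u t') - (a • P t + c • u t))
            = (a • P t + c • (w + u t)) - (a' • P t' + c' • (w + u t')) := by module
        rw [heq, sub_self] at h4
        exact sub_eq_zero.mp h4
      have h5 : (c - c') • w ∈ S := by
        rw [h3]
        exact sub_mem (add_mem (Submodule.smul_mem _ _ (hPS t')) (Submodule.smul_mem _ _ (huS t')))
          (add_mem (Submodule.smul_mem _ _ (hPS t)) (Submodule.smul_mem _ _ (huS t)))
      have h6 := Submodule.smul_mem S (c - c')⁻¹ h5
      rwa [smul_smul, inv_mul_cancel₀ (sub_ne_zero.mpr hcc), one_smul] at h6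
    subst hcc
    by_cases hc : c = 0
    · have h3 : a • P t + (-a') • P t' = 0 := by
        have h4 : a • P t + (-a') • P t' =
            (a • P t + c • (w + u t)) - (a' • P t' + c • (w + u t')) := by
          rw [hc]; module
        rw [h4, heq, sub_self]
      obtain ⟨ha, ha'⟩ := (LinearIndependent.pair_iff.mp (hPli t t' hne)) a (-a') h3
      have : x = 0 := by rw [← h1, hc, ha, zero_smul, zero_smul, add_zero]
      simp [this]
    · exfalso
      apply hu t t' hne
      rw [Submodule.mem_span_pair]
      refine ⟨c⁻¹ * a, c⁻¹ * (-a'), ?_⟩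
      have h3 : a • P t + (-a') • P t' = c • (u t' - u t) := by
        have h4 : (a • P t + (-a') • P t') - c • (u t' - u t)
            = (a • P t + c • (w + u t)) - (a' • P t' + c • (w + u t')) := by module
        rw [heq, sub_self] at h4
        exact sub_eq_zero.mp h4
      calc (c⁻¹ * a) • P t + (c⁻¹ * (-a')) • P t'
          = c⁻¹ • (a • P t + (-a') • P t') := by module
        _ = c⁻¹ • (c • (u t' - u t)) := by rw [h3]
        _ = u t' - u t := by rw [smul_smul, inv_mul_cancel₀ hc, one_smul]
  -- assemble
  have hmemU : ∀ ℓ, ℓ ∈ (⋃ i, Set.range (fun o : Option F => L (i, o))) →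
      ∃ t : Fin k × Option F, ℓ = L t := by
    intro ℓ hℓ
    rw [Set.mem_iUnion] at hℓ
    obtain ⟨i, o, rfl⟩ := hℓ
    exact ⟨(i, o), rfl⟩
  have holdnew : ∀ ℓ ∈ Fs \ Set.range r, ∀ t, ℓ ⊓ L t = ⊥ := by
    intro ℓ hℓ t
    rw [eq_bot_iff]
    intro x hx
    obtain ⟨hx1, hx2⟩ := Submodule.mem_inf.mp hx
    obtain ⟨a, hax⟩ := hLS t x hx2 (hFsS _ hℓ.1 hx1)
    have hxr : x ∈ r t.1 := by
      rw [hax]; exact Submodule.smul_mem _ _ (hPmem t)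
    have hℓr : ℓ ≠ r t.1 := fun h => hℓ.2 ⟨t.1, h.symm⟩
    have hb := hFsskew _ hℓ.1 _ (hr t.1) hℓr
    have : x ∈ ℓ ⊓ r t.1 := Submodule.mem_inf.mpr ⟨hx1, hxr⟩
    rwa [hb] at this
  refine ⟨fun i => Set.range (fun o : Option F => L (i, o)), ?_, ?_, ?_, ?_, ?_⟩
  · -- cardinality
    intro i
    have hinj : Function.Injective (fun o : Option F => L (i, o)) := by
      intro o o' h
      by_contra hne
      have hd := hLdisj (i, o) (i, o') (by simp [hne])
      simp only at h
      rw [h, inf_idem] at hd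
      have := hLrank (i, o')
      rw [hd] at this
      simp [finrank_bot] at this
    rw [← Nat.card_coe_set_eq, Nat.card_range_of_injective hinj,
      Nat.card_eq_fintype_card, Fintype.card_option, hF]
  · -- rank and not in S
    rintro i ℓ ⟨o, rfl⟩
    exact ⟨hLrank (i, o), hLnotS (i, o)⟩
  · -- covering
    intro i v hv hv0
    have hsum := (b i).sum_repr ⟨v, hv⟩
    set a : F := (b i).repr ⟨v, hv⟩ 0 with hadef
    set c : F := (b i).repr ⟨v, hv⟩ 1 with hcdef
    have hvac : a • e0 i + c • e1 i = v := by
      rw [Fin.sum_univ_two] at hsum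
      have h2 : ((a • (b i) 0 + c • (b i) 1 : r i) : Fin 5 → F) = v :=
        congrArg Subtype.val hsum
      simp only [Submodule.coe_add, Submodule.coe_smul] at h2
      exact h2
    by_cases ha : a = 0
    · refine ⟨L (i, none), ⟨none, rfl⟩, ?_⟩
      have h2 : v = c • P (i, none) := by
        show v = c • e1 i
        rw [← hvac, ha, zero_smul, zero_add]
      rw [h2]
      exact Submodule.smul_mem _ _ (Submodule.subset_span (by simp))
    · refine ⟨L (i, some (a⁻¹ * c)), ⟨some (a⁻¹ * c), rfl⟩, ?_⟩
      have h2 : v = a • P (i, some (a⁻¹ * c)) := by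
        show v = a • (e0 i + (a⁻¹ * c) • e1 i)
        rw [smul_add, smul_smul, ← mul_assoc, mul_inv_cancel₀ ha, one_mul, hvac]
      rw [h2]
      exact Submodule.smul_mem _ _ (Submodule.subset_span (by simp))
  · -- partial spread: ranks
    rintro ℓ (⟨hℓ, -⟩ | hℓ)
    · exact hFsline _ hℓ
    · obtain ⟨t, rfl⟩ := hmemU ℓ hℓ
      exact hLrank t
  · -- partial spread: skewness
    rintro ℓ₁ h1 ℓ₂ h2 hne
    rcases h1 with h1 | h1 <;> rcases h2 with h2 | h2
    · exact hFsskew _ h1.1 _ h2.1 hne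
    · obtain ⟨t, rfl⟩ := hmemU ℓ₂ h2
      exact holdnew _ h1 t
    · obtain ⟨t, rfl⟩ := hmemU ℓ₁ h1
      rw [inf_comm]
      exact holdnew _ h2 t
    · obtain ⟨t, rfl⟩ := hmemU ℓ₁ h1
      obtain ⟨t', rfl⟩ := hmemU ℓ₂ h2
      exact hLdisj t t' (fun h => hne (by rw [h]))
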